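/- Let X be a proper metric space admitting a geodesic bicombing. For nonempty compact A, B ⊆ X and t ∈ [0,1], define Σ(A,B,t) = (⋃_{a∈A} ⋃_{u∈P_B(a)} ω(a,u,t)) ∪ (⋃_{b∈B} ⋃_{v∈P_A(b)} ω(v,b,t)). Then Σ(A,B,·) is a linearly reparametrized geodesic from A to B in (K(X), d_H): Σ(A,B,0) = A, Σ(A,B,1) = B, and d_H(Σ(A,B,s), Σ(A,B,t)) = |t−s|·d_H(A,B). -/

import Mathlib

/-- Metric projection onto a set. -/
def metricProj {X : Type*} [MetricSpace X] (B : Set X) (a : X) : Set X :=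
  {b ∈ B | dist a b = Metric.infDist a B}

/-- ω(a,b,t): the set of t-fraction metric midpoints between a and b. -/
def omegaSet {X : Type*} [MetricSpace X] (a b : X) (t : ℝ) : Set X :=
  {x : X | dist a x = t * dist a b ∧ dist x b = (1 - t) * dist a b}

/-- The bicombing on K(X) from metric projections and ω. -/
def SigK {X : Type*} [MetricSpace X] (A B : Set X) (t : ℝ) : Set X :=
  (⋃ a ∈ A, ⋃ u ∈ metricProj B a, omegaSet a u t) ∪
  (⋃ b ∈ B, ⋃ v ∈ metricProj A b, omegaSet v b t)

section Aux

variable {X : Type*} [MetricSpace X]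

lemma aux_le_infDist {S : Set X} {x : X} {r : ℝ} (hS : S.Nonempty)
    (h : ∀ y ∈ S, r ≤ dist x y) : r ≤ Metric.infDist x S := by
  by_contra hc
  push_neg at hc
  obtain ⟨y, hy, hlt⟩ := (Metric.infDist_lt_iff hS).1 hc
  exact absurd (h y hy) (not_le.2 hlt)

lemma aux_omega_zero (a u : X) : omegaSet a u 0 = {a} := by
  ext x
  simp only [omegaSet, Set.mem_setOf_eq, Set.mem_singleton_iff, zero_mul, sub_zero, one_mul,
    dist_eq_zero]
  constructor
  · rintro ⟨h, -⟩; exact h.symm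
  · rintro rfl; exact ⟨rfl, rfl⟩

lemma aux_omega_one (a u : X) : omegaSet a u 1 = {u} := by
  ext x
  simp only [omegaSet, Set.mem_setOf_eq, Set.mem_singleton_iff, one_mul, sub_self, zero_mul,
    dist_eq_zero]
  constructor
  · rintro ⟨-, h⟩; exact h
  · rintro rfl; exact ⟨rfl, rfl⟩

lemma aux_mem_SigK {A B : Set X} {t : ℝ} {x : X} :
    x ∈ SigK A B t ↔
      (∃ a ∈ A, ∃ u ∈ metricProj B a, x ∈ omegaSet a u t) ∨
      (∃ b ∈ B, ∃ v ∈ metricProj A b, x ∈ omegaSet v b t) := by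
  simp [SigK]

lemma aux_sigma_mem (σ : X → X → ℝ → X)
    (h0 : ∀ x y, σ x y 0 = x) (h1 : ∀ x y, σ x y 1 = y)
    (hgeo : ∀ x y, ∀ s ∈ Set.Icc (0:ℝ) 1, ∀ t ∈ Set.Icc (0:ℝ) 1,
      dist (σ x y s) (σ x y t) = |t - s| * dist x y)
    (a u : X) {t : ℝ} (ht : t ∈ Set.Icc (0:ℝ) 1) :
    σ a u t ∈ omegaSet a u t := by
  constructor
  · have := hgeo a u 0 (by constructor <;> norm_num) t ht
    rw [h0] at this
    rw [this, sub_zero, abs_of_nonneg ht.1]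
  · have := hgeo a u t ht 1 (by constructor <;> norm_num)
    rw [h1] at this
    rw [this, abs_of_nonneg (by linarith [ht.2] : (0:ℝ) ≤ 1 - t)]

/-- Key construction: from a point of ω(a,u,s) one can move to a point of ω(a,u,t)
at distance |t-s|·d(a,u). -/
lemma aux_move (σ : X → X → ℝ → X)
    (h0 : ∀ x y, σ x y 0 = x) (h1 : ∀ x y, σ x y 1 = y)
    (hgeo : ∀ x y, ∀ s ∈ Set.Icc (0:ℝ) 1, ∀ t ∈ Set.Icc (0:ℝ) 1,
      dist (σ x y s) (σ x y t) = |t - s| * dist x y)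
    {a u x : X} {s t : ℝ} (hs : s ∈ Set.Icc (0:ℝ) 1) (ht : t ∈ Set.Icc (0:ℝ) 1)
    (hx : x ∈ omegaSet a u s) :
    ∃ y ∈ omegaSet a u t, dist x y ≤ |t - s| * dist a u := by
  obtain ⟨hx1, hx2⟩ := hx
  have hDnn : (0:ℝ) ≤ dist a u := dist_nonneg
  rcases le_or_gt t s with hts | hst
  · -- t ≤ s : move back towards a
    rcases eq_or_lt_of_le hs.1 with hs0 | hs0
    · -- s = 0, hence t = 0
      have ht0 : t = 0 := le_antisymm (hts.trans hs0.symm.le) ht.1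
      rw [← hs0] at hx1 hx2
      refine ⟨x, ?_, ?_⟩
      · rw [ht0]; exact ⟨hx1, hx2⟩
      · rw [dist_self]; positivity
    · -- 0 < s
      have hsne : s ≠ 0 := ne_of_gt hs0
      have hr : t / s ∈ Set.Icc (0:ℝ) 1 := by
        constructor
        · exact div_nonneg ht.1 hs.1
        · rw [div_le_one hs0]; exact hts
      have hda : dist a (σ a x (t/s)) = t * dist a u := by
        have h := hgeo a x 0 (by constructor <;> norm_num) (t/s) hr
        rw [h0] at h
        rw [h, sub_zero, abs_of_nonneg hr.1, hx1]
        field_simp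
      have hd1 : dist (σ a x (t/s)) x = (s - t) * dist a u := by
        have h := hgeo a x (t/s) hr 1 (by constructor <;> norm_num)
        rw [h1] at h
        rw [h, abs_of_nonneg (by linarith [hr.2] : (0:ℝ) ≤ 1 - t/s), hx1]
        field_simp
      refine ⟨σ a x (t / s), ⟨hda, ?_⟩, ?_⟩
      · have hle : dist (σ a x (t/s)) u ≤ (1 - t) * dist a u := by
          calc dist (σ a x (t/s)) u ≤ dist (σ a x (t/s)) x + dist x u := dist_triangle _ _ _
            _ = (s - t) * dist a u + (1 - s) * dist a u := by rw [hd1, hx2]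
            _ = (1 - t) * dist a u := by ring
        have hge : (1 - t) * dist a u ≤ dist (σ a x (t/s)) u := by
          have htr : dist a u ≤ dist a (σ a x (t/s)) + dist (σ a x (t/s)) u :=
            dist_triangle a _ u
          nlinarith [htr, hda]
        exact le_antisymm hle hge
      · rw [dist_comm, hd1, abs_of_nonpos (by linarith : t - s ≤ 0), neg_sub]
  · -- s < t : move towards u; note s < 1
    have hs1 : s < 1 := lt_of_lt_of_le hst ht.2
    have h1s : (0:ℝ) < 1 - s := by linarith
    have hr : (t - s) / (1 - s) ∈ Set.Icc (0:ℝ) 1 := by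
      constructor
      · exact div_nonneg (by linarith) h1s.le
      · rw [div_le_one h1s]; linarith [ht.2]
    set r := (t - s) / (1 - s) with hrdef
    have hdxy : dist x (σ x u r) = (t - s) * dist a u := by
      have h := hgeo x u 0 (by constructor <;> norm_num) r hr
      rw [h0] at h
      rw [h, sub_zero, abs_of_nonneg hr.1, hx2, hrdef]
      field_simp
    have hdyu : dist (σ x u r) u = (1 - t) * dist a u := by
      have h := hgeo x u r hr 1 (by constructor <;> norm_num)
      rw [h1] at h
      rw [h, abs_of_nonneg (by linarith [hr.2] : (0:ℝ) ≤ 1 - r), hx2, hrdef]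
      field_simp
      ring
    have hday : dist a (σ x u r) = t * dist a u := by
      have hle : dist a (σ x u r) ≤ t * dist a u := by
        calc dist a (σ x u r) ≤ dist a x + dist x (σ x u r) := dist_triangle _ _ _
          _ = s * dist a u + (t - s) * dist a u := by rw [hx1, hdxy]
          _ = t * dist a u := by ring
      have hge : t * dist a u ≤ dist a (σ x u r) := by
        have htr : dist a u ≤ dist a (σ x u r) + dist (σ x u r) u := dist_triangle a _ u
        nlinarith [htr, hdyu]
      exact le_antisymm hle hge
    refine ⟨σ x u r, ⟨hday, hdyu⟩, ?_⟩
    rw [hdxy, abs_of_nonneg (by linarith : (0:ℝ) ≤ t - s)]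

end Aux

/-- in a proper metric space with a geodesic bicombing, Σ(A,B,·)
is a linearly reparametrized geodesic from A to B in (K(X), d_H). -/
theorem SigK_is_geodesic {X : Type*} [MetricSpace X] [ProperSpace X]
    (σ : X → X → ℝ → X)
    (h0 : ∀ x y, σ x y 0 = x) (h1 : ∀ x y, σ x y 1 = y)
    (hgeo : ∀ x y, ∀ s ∈ Set.Icc (0:ℝ) 1, ∀ t ∈ Set.Icc (0:ℝ) 1,
      dist (σ x y s) (σ x y t) = |t - s| * dist x y)
    (A B : Set X) (hAne : A.Nonempty) (hAcp : IsCompact A)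
    (hBne : B.Nonempty) (hBcp : IsCompact B) :
    SigK A B 0 = A ∧ SigK A B 1 = B ∧
      ∀ s ∈ Set.Icc (0:ℝ) 1, ∀ t ∈ Set.Icc (0:ℝ) 1,
        Metric.hausdorffDist (SigK A B s) (SigK A B t) =
          |t - s| * Metric.hausdorffDist A B := by
  classical
  set D := Metric.hausdorffDist A B with hDdef
  -- projections are nonempty
  have hprojB : ∀ a : X, ∃ u, u ∈ metricProj B a := by
    intro a
    obtain ⟨u, hu, hud⟩ := hBcp.exists_infDist_eq_dist hBne a
    exact ⟨u, hu, hud.symm⟩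
  have hprojA : ∀ b : X, ∃ v, v ∈ metricProj A b := by
    intro b
    obtain ⟨v, hv, hvd⟩ := hAcp.exists_infDist_eq_dist hAne b
    exact ⟨v, hv, hvd.symm⟩
  have hABtop : EMetric.hausdorffEdist A B ≠ ⊤ :=
    Metric.hausdorffEdist_ne_top_of_nonempty_of_bounded hAne hBne hAcp.isBounded hBcp.isBounded
  have hBAtop : EMetric.hausdorffEdist B A ≠ ⊤ := by
    show Metric.hausdorffEDist B A ≠ ⊤; rw [EMetric.hausdorffEdist_comm]; exact hABtop
  have hDnn : 0 ≤ D := Metric.hausdorffDist_nonneg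
  -- distances within projections bounded by D
  have hpBle : ∀ a ∈ A, ∀ u ∈ metricProj B a, dist a u ≤ D := by
    intro a ha u hu
    rw [hu.2]
    exact Metric.infDist_le_hausdorffDist_of_mem ha hABtop
  have hpAle : ∀ b ∈ B, ∀ v ∈ metricProj A b, dist b v ≤ D := by
    intro b hb v hv
    rw [hv.2, hDdef, Metric.hausdorffDist_comm]
    exact Metric.infDist_le_hausdorffDist_of_mem hb hBAtop
  -- endpoints
  have hend0 : SigK A B 0 = A := by
    ext x
    rw [aux_mem_SigK]
    constructor
    · rintro (⟨a, ha, u, hu, hx⟩ | ⟨b, hb, v, hv, hx⟩)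
      · rw [aux_omega_zero] at hx; rwa [hx]
      · rw [aux_omega_zero] at hx; rw [hx]; exact hv.1
    · intro hx
      obtain ⟨u, hu⟩ := hprojB x
      exact Or.inl ⟨x, hx, u, hu, by rw [aux_omega_zero]; rfl⟩
  have hend1 : SigK A B 1 = B := by
    ext x
    rw [aux_mem_SigK]
    constructor
    · rintro (⟨a, ha, u, hu, hx⟩ | ⟨b, hb, v, hv, hx⟩)
      · rw [aux_omega_one] at hx; rw [hx]; exact hu.1
      · rw [aux_omega_one] at hx; rwa [hx]
    · intro hx
      obtain ⟨v, hv⟩ := hprojA x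
      exact Or.inr ⟨x, hx, v, hv, by rw [aux_omega_one]; rfl⟩
  refine ⟨hend0, hend1, ?_⟩
  -- nonemptiness and boundedness of the sections
  have hne : ∀ t ∈ Set.Icc (0:ℝ) 1, (SigK A B t).Nonempty := by
    intro t ht
    obtain ⟨a, ha⟩ := hAne
    obtain ⟨u, hu⟩ := hprojB a
    exact ⟨σ a u t, aux_mem_SigK.2 (Or.inl ⟨a, ha, u, hu,
      aux_sigma_mem σ h0 h1 hgeo a u ht⟩)⟩
  obtain ⟨a₀, ha₀⟩ := id hAne
  obtain ⟨R, hR⟩ := (hAcp.union hBcp).isBounded.subset_closedBall a₀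
  have hbd : ∀ t ∈ Set.Icc (0:ℝ) 1, Bornology.IsBounded (SigK A B t) := by
    intro t ht
    refine (Metric.isBounded_closedBall (x := a₀) (r := 3 * R)).subset ?_
    intro x hx
    rw [aux_mem_SigK] at hx
    have key : ∀ p q : X, p ∈ A ∪ B → q ∈ A ∪ B → dist p x = t * dist p q →
        x ∈ Metric.closedBall a₀ (3 * R) := by
      intro p q hp hq hpx
      have hpA : dist p a₀ ≤ R := by
        have := hR hp; rwa [Metric.mem_closedBall] at this
      have hqA : dist q a₀ ≤ R := by
        have := hR hq; rwa [Metric.mem_closedBall] at this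
      have hpq : dist p q ≤ 2 * R := by
        calc dist p q ≤ dist p a₀ + dist a₀ q := dist_triangle _ _ _
          _ ≤ R + R := add_le_add hpA (by rwa [dist_comm])
          _ = 2 * R := by ring
      have hpxle : dist p x ≤ 2 * R := by
        rw [hpx]
        calc t * dist p q ≤ 1 * dist p q := by
              apply mul_le_mul_of_nonneg_right ht.2 dist_nonneg
          _ = dist p q := one_mul _
          _ ≤ 2 * R := hpq
      rw [Metric.mem_closedBall]
      calc dist x a₀ ≤ dist x p + dist p a₀ := dist_triangle _ _ _
        _ ≤ 2 * R + R := add_le_add (by rwa [dist_comm]) hpA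
        _ = 3 * R := by ring
    rcases hx with ⟨a, ha, u, hu, hx1, _⟩ | ⟨b, hb, v, hv, hx1, _⟩
    · exact key a u (Or.inl ha) (Or.inr hu.1) hx1
    · exact key v b (Or.inl hv.1) (Or.inr hb) hx1
  -- Hausdorff distance realized by a point of A or B
  have hreal : (∃ a ∈ A, Metric.infDist a B = D) ∨ (∃ b ∈ B, Metric.infDist b A = D) := by
    obtain ⟨amax, hamax, hamaxmax⟩ := hAcp.exists_isMaxOn hAne
      (Metric.continuous_infDist_pt B).continuousOn
    obtain ⟨bmax, hbmax, hbmaxmax⟩ := hBcp.exists_isMaxOn hBne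
      (Metric.continuous_infDist_pt A).continuousOn
    have hrle : max (Metric.infDist amax B) (Metric.infDist bmax A) ≤ D := by
      apply max_le
      · exact Metric.infDist_le_hausdorffDist_of_mem hamax hABtop
      · rw [hDdef, Metric.hausdorffDist_comm]
        exact Metric.infDist_le_hausdorffDist_of_mem hbmax hBAtop
    have hler : D ≤ max (Metric.infDist amax B) (Metric.infDist bmax A) := by
      apply Metric.hausdorffDist_le_of_mem_dist
      · exact le_trans Metric.infDist_nonneg (le_max_left _ _)
      · intro x hx
        obtain ⟨y, hy, hyd⟩ := hBcp.exists_infDist_eq_dist hBne x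
        exact ⟨y, hy, by rw [← hyd]; exact le_trans (hamaxmax hx) (le_max_left _ _)⟩
      · intro x hx
        obtain ⟨y, hy, hyd⟩ := hAcp.exists_infDist_eq_dist hAne x
        exact ⟨y, hy, by rw [← hyd]; exact le_trans (hbmaxmax hx) (le_max_right _ _)⟩
    have heq := le_antisymm hler hrle
    rcases max_choice (Metric.infDist amax B) (Metric.infDist bmax A) with hm | hm
    · left; exact ⟨amax, hamax, (heq.trans hm).symm⟩
    · right; exact ⟨bmax, hbmax, (heq.trans hm).symm⟩
  -- main statement for s ≤ t
  have key : ∀ s ∈ Set.Icc (0:ℝ) 1, ∀ t ∈ Set.Icc (0:ℝ) 1, s ≤ t →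
      Metric.hausdorffDist (SigK A B s) (SigK A B t) = (t - s) * D := by
    intro s hs t ht hst
    have htsnn : (0:ℝ) ≤ t - s := by linarith
    -- upper bound
    have hupper : Metric.hausdorffDist (SigK A B s) (SigK A B t) ≤ (t - s) * D := by
      apply Metric.hausdorffDist_le_of_mem_dist (mul_nonneg htsnn hDnn)
      · intro x hx
        rw [aux_mem_SigK] at hx
        rcases hx with ⟨a, ha, u, hu, hx⟩ | ⟨b, hb, v, hv, hx⟩
        · obtain ⟨y, hy, hyd⟩ := aux_move σ h0 h1 hgeo hs ht hx
          refine ⟨y, aux_mem_SigK.2 (Or.inl ⟨a, ha, u, hu, hy⟩), ?_⟩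
          calc dist x y ≤ |t - s| * dist a u := hyd
            _ = (t - s) * dist a u := by rw [abs_of_nonneg htsnn]
            _ ≤ (t - s) * D := mul_le_mul_of_nonneg_left (hpBle a ha u hu) htsnn
        · obtain ⟨y, hy, hyd⟩ := aux_move σ h0 h1 hgeo hs ht hx
          refine ⟨y, aux_mem_SigK.2 (Or.inr ⟨b, hb, v, hv, hy⟩), ?_⟩
          calc dist x y ≤ |t - s| * dist v b := hyd
            _ = (t - s) * dist v b := by rw [abs_of_nonneg htsnn]
            _ ≤ (t - s) * D := by
                refine mul_le_mul_of_nonneg_left ?_ htsnn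
                rw [dist_comm]; exact hpAle b hb v hv
      · intro x hx
        rw [aux_mem_SigK] at hx
        rcases hx with ⟨a, ha, u, hu, hx⟩ | ⟨b, hb, v, hv, hx⟩
        · obtain ⟨y, hy, hyd⟩ := aux_move σ h0 h1 hgeo ht hs hx
          refine ⟨y, aux_mem_SigK.2 (Or.inl ⟨a, ha, u, hu, hy⟩), ?_⟩
          calc dist x y ≤ |s - t| * dist a u := hyd
            _ = (t - s) * dist a u := by rw [abs_sub_comm, abs_of_nonneg htsnn]
            _ ≤ (t - s) * D := mul_le_mul_of_nonneg_left (hpBle a ha u hu) htsnn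
        · obtain ⟨y, hy, hyd⟩ := aux_move σ h0 h1 hgeo ht hs hx
          refine ⟨y, aux_mem_SigK.2 (Or.inr ⟨b, hb, v, hv, hy⟩), ?_⟩
          calc dist x y ≤ |s - t| * dist v b := hyd
            _ = (t - s) * dist v b := by rw [abs_sub_comm, abs_of_nonneg htsnn]
            _ ≤ (t - s) * D := by
                refine mul_le_mul_of_nonneg_left ?_ htsnn
                rw [dist_comm]; exact hpAle b hb v hv
    -- lower bound
    have hSStop : EMetric.hausdorffEdist (SigK A B s) (SigK A B t) ≠ ⊤ :=
      Metric.hausdorffEdist_ne_top_of_nonempty_of_bounded (hne s hs) (hne t ht)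
        (hbd s hs) (hbd t ht)
    have hlower : (t - s) * D ≤ Metric.hausdorffDist (SigK A B s) (SigK A B t) := by
      rcases hreal with ⟨a, ha, haD⟩ | ⟨b, hb, hbD⟩
      · -- a ∈ A with infDist a B = D; point σ a u s ∈ Σ(s) is (t-s)D-far from Σ(t)
        obtain ⟨u, hu⟩ := hprojB a
        have hau : dist a u = D := by rw [hu.2, haD]
        set x := σ a u s with hxdef
        have hxmem : x ∈ SigK A B s :=
          aux_mem_SigK.2 (Or.inl ⟨a, ha, u, hu, aux_sigma_mem σ h0 h1 hgeo a u hs⟩)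
        have hxo : x ∈ omegaSet a u s := aux_sigma_mem σ h0 h1 hgeo a u hs
        have hax : dist a x = s * D := by rw [hxo.1, hau]
        have hfar : ∀ y ∈ SigK A B t, (t - s) * D ≤ dist x y := by
          intro y hy
          rw [aux_mem_SigK] at hy
          rcases hy with ⟨a', ha', u', hu', hy1, hy2⟩ | ⟨b', hb', v', hv', hy1, hy2⟩
          · have hD' : dist a' u' ≤ D := hpBle a' ha' u' hu'
            have h1' : D ≤ dist a u' := haD ▸ Metric.infDist_le_dist_of_mem hu'.1
            have h2' : dist a u' ≤ dist a x + dist x u' := dist_triangle _ _ _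
            have h3' : dist x u' ≤ dist x y + dist y u' := dist_triangle _ _ _
            -- dist y u' = (1-t) * dist a' u'
            nlinarith [hy2, hax, dist_nonneg (x := a') (y := u'), ht.2]
          · have hD' : dist v' b' ≤ D := by
              rw [dist_comm]; exact hpAle b' hb' v' hv'
            have h1' : D ≤ dist a b' := haD ▸ Metric.infDist_le_dist_of_mem hb'
            have h2' : dist a b' ≤ dist a x + dist x b' := dist_triangle _ _ _
            have h3' : dist x b' ≤ dist x y + dist y b' := dist_triangle _ _ _
            nlinarith [hy2, hax, dist_nonneg (x := v') (y := b'), ht.2]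
        calc (t - s) * D ≤ Metric.infDist x (SigK A B t) :=
              aux_le_infDist (hne t ht) hfar
          _ ≤ Metric.hausdorffDist (SigK A B s) (SigK A B t) :=
              Metric.infDist_le_hausdorffDist_of_mem hxmem hSStop
      · -- b ∈ B with infDist b A = D; point σ v b t ∈ Σ(t) is (t-s)D-far from Σ(s)
        obtain ⟨v, hv⟩ := hprojA b
        have hvb : dist v b = D := by rw [dist_comm, hv.2, hbD]
        set x := σ v b t with hxdef
        have hxmem : x ∈ SigK A B t :=
          aux_mem_SigK.2 (Or.inr ⟨b, hb, v, hv, aux_sigma_mem σ h0 h1 hgeo v b ht⟩)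
        have hxo : x ∈ omegaSet v b t := aux_sigma_mem σ h0 h1 hgeo v b ht
        have hxb : dist x b = (1 - t) * D := by rw [hxo.2, hvb]
        have hfar : ∀ y ∈ SigK A B s, (t - s) * D ≤ dist x y := by
          intro y hy
          rw [aux_mem_SigK] at hy
          rcases hy with ⟨a', ha', u', hu', hy1, hy2⟩ | ⟨b', hb', v', hv', hy1, hy2⟩
          · have hD' : dist a' u' ≤ D := hpBle a' ha' u' hu'
            have h1' : D ≤ dist b a' := hbD ▸ Metric.infDist_le_dist_of_mem ha'
            have h2' : dist b a' ≤ dist b x + dist x a' := dist_triangle _ _ _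
            have h3' : dist x a' ≤ dist x y + dist y a' := dist_triangle _ _ _
            have hya' : dist y a' = s * dist a' u' := by rw [dist_comm]; exact hy1
            have hbx : dist b x = (1 - t) * D := by rw [dist_comm]; exact hxb
            nlinarith [dist_nonneg (x := a') (y := u'), hs.1]
          · have hD' : dist v' b' ≤ D := by
              rw [dist_comm]; exact hpAle b' hb' v' hv'
            have h1' : D ≤ dist b v' := hbD ▸ Metric.infDist_le_dist_of_mem hv'.1
            have h2' : dist b v' ≤ dist b x + dist x v' := dist_triangle _ _ _
            have h3' : dist x v' ≤ dist x y + dist y v' := dist_triangle _ _ _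
            have hyv' : dist y v' = s * dist v' b' := by rw [dist_comm]; exact hy1
            have hbx : dist b x = (1 - t) * D := by rw [dist_comm]; exact hxb
            nlinarith [dist_nonneg (x := v') (y := b'), hs.1]
        calc (t - s) * D ≤ Metric.infDist x (SigK A B s) :=
              aux_le_infDist (hne s hs) hfar
          _ ≤ Metric.hausdorffDist (SigK A B t) (SigK A B s) :=
              Metric.infDist_le_hausdorffDist_of_mem hxmem (by
                rw [EMetric.hausdorffEdist_comm]; exact hSStop)
          _ = Metric.hausdorffDist (SigK A B s) (SigK A B t) :=
              Metric.hausdorffDist_comm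
    exact le_antisymm hupper hlower
  intro s hs t ht
  rcases le_total s t with hst | hts
  · rw [key s hs t ht hst, abs_of_nonneg (by linarith : (0:ℝ) ≤ t - s)]
  · rw [Metric.hausdorffDist_comm, key t ht s hs hts,
      abs_sub_comm, abs_of_nonneg (by linarith : (0:ℝ) ≤ s - t)]
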